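/- arXiv:2403.18398 — 4 statements merged into one kernel-verified Lean document; each statement's English description precedes it below -/
import Mathlib

section
/- For every time horizon T ∈ ℕ, the projected LMS parameter estimates satisfy the cumulative prediction-error bound Σ_{k=0}^{T} ‖D_k(θ* − θ̂_k)‖² ≤ (1/μ)‖θ̂_0 − θ*‖² + Σ_{k=0}^{T} ‖w_k‖², where ‖·‖ denotes the Euclidean norm. -/
open Matrix Finset

/-- Euclidean norm of a vector in `ℝ^n`. -/
noncomputable def vnorm {n : ℕ} (v : Fin n → ℝ) : ℝ := Real.sqrt (∑ i, v i ^ 2)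

/-- Spectral norm (ℓ²-operator norm) of a matrix. -/
noncomputable def specNorm {n d : ℕ} (D : Matrix (Fin n) (Fin d) ℝ) : ℝ :=
  ‖LinearMap.toContinuousLinearMap (Matrix.toEuclideanLin D)‖

lemma vnorm_eq {n : ℕ} (v : Fin n → ℝ) :
    vnorm v = ‖(WithLp.equiv 2 (Fin n → ℝ)).symm v‖ := by
  rw [vnorm, EuclideanSpace.norm_eq]
  simp [Real.norm_eq_abs, sq_abs]

lemma inner_transpose {n d : ℕ} (D : Matrix (Fin n) (Fin d) ℝ) (u : Fin d → ℝ) (p : Fin n → ℝ) :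
    (inner ℝ ((WithLp.equiv 2 (Fin d → ℝ)).symm u)
      ((WithLp.equiv 2 (Fin d → ℝ)).symm (Dᵀ.mulVec p)) : ℝ)
    = inner ℝ ((WithLp.equiv 2 (Fin n → ℝ)).symm (D.mulVec u))
      ((WithLp.equiv 2 (Fin n → ℝ)).symm p) := by
  simp only [PiLp.inner_apply, RCLike.inner_apply, conj_trivial, WithLp.equiv_symm_apply, PiLp.toLp_apply]
  have : ∑ i, u i * (Dᵀ.mulVec p) i = (D.mulVec u) ⬝ᵥ p := by
    rw [show ∑ i, u i * (Dᵀ.mulVec p) i = u ⬝ᵥ (Dᵀ *ᵥ p) from rfl,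
      dotProduct_mulVec, Matrix.vecMul_transpose]
  simpa [dotProduct, mul_comm] using this

lemma mulVec_norm_le {n d : ℕ} (D : Matrix (Fin n) (Fin d) ℝ) (u : Fin d → ℝ) :
    ‖(WithLp.equiv 2 (Fin n → ℝ)).symm (D.mulVec u)‖ ≤
      specNorm D * ‖(WithLp.equiv 2 (Fin d → ℝ)).symm u‖ := by
  have h := (LinearMap.toContinuousLinearMap (Matrix.toEuclideanLin D)).le_opNorm
    ((WithLp.equiv 2 (Fin d → ℝ)).symm u)
  simpa [specNorm, WithLp.equiv_symm_apply, Matrix.toEuclideanLin_apply_piLp_toLp] using h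

lemma mulVec_transpose_norm_le {n d : ℕ} (D : Matrix (Fin n) (Fin d) ℝ) (p : Fin n → ℝ) :
    ‖(WithLp.equiv 2 (Fin d → ℝ)).symm (Dᵀ.mulVec p)‖ ≤
      specNorm D * ‖(WithLp.equiv 2 (Fin n → ℝ)).symm p‖ := by
  set y := (WithLp.equiv 2 (Fin d → ℝ)).symm (Dᵀ.mulVec p) with hy
  set P := (WithLp.equiv 2 (Fin n → ℝ)).symm p with hP
  have hs : (0:ℝ) ≤ specNorm D := norm_nonneg _
  rcases eq_or_lt_of_le (norm_nonneg y) with h0 | h0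
  · rw [← h0]; positivity
  · have key : ‖y‖ ^ 2 ≤ (specNorm D * ‖P‖) * ‖y‖ := by
      have h1 : ‖y‖ ^ 2 = inner ℝ ((WithLp.equiv 2 (Fin n → ℝ)).symm (D.mulVec (Dᵀ.mulVec p))) P := by
        rw [← real_inner_self_eq_norm_sq, hy, inner_transpose D (Dᵀ.mulVec p) p]
      have h2 : (inner ℝ ((WithLp.equiv 2 (Fin n → ℝ)).symm (D.mulVec (Dᵀ.mulVec p))) P : ℝ) ≤
          ‖(WithLp.equiv 2 (Fin n → ℝ)).symm (D.mulVec (Dᵀ.mulVec p))‖ * ‖P‖ :=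
        real_inner_le_norm _ _
      have h3 := mulVec_norm_le D (Dᵀ.mulVec p)
      rw [h1]
      calc _ ≤ ‖(WithLp.equiv 2 (Fin n → ℝ)).symm (D.mulVec (Dᵀ.mulVec p))‖ * ‖P‖ := h2
        _ ≤ (specNorm D * ‖y‖) * ‖P‖ := by
            apply mul_le_mul_of_nonneg_right _ (norm_nonneg _); exact h3
        _ = (specNorm D * ‖P‖) * ‖y‖ := by ring
    nlinarith [key, h0]

/-- Projection onto a convex set is distance-contracting w.r.t. points of the set. -/
lemma proj_contract {F : Type*} [NormedAddCommGroup F] [InnerProductSpace ℝ F]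
    {K : Set F} (hK : Convex ℝ K) {x y θ : F} (hy : y ∈ K) (hθ : θ ∈ K)
    (hmin : ∀ z ∈ K, ‖y - x‖ ≤ ‖z - x‖) : ‖y - θ‖ ≤ ‖x - θ‖ := by
  set c : ℝ := inner ℝ (x - y) (θ - y) with hc
  set s : ℝ := ‖θ - y‖ ^ 2 with hs
  have hs0 : 0 ≤ s := sq_nonneg _
  have key : ∀ t : ℝ, 0 ≤ t → t ≤ 1 → 0 ≤ -2 * t * c + t ^ 2 * s := by
    intro t ht0 ht1
    have hz : y + t • (θ - y) ∈ K := hK.add_smul_sub_mem hy hθ ⟨ht0, ht1⟩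
    have h := hmin _ hz
    have hsq : ‖y - x‖ ^ 2 ≤ ‖y + t • (θ - y) - x‖ ^ 2 :=
      pow_le_pow_left₀ (norm_nonneg _) h 2
    have hexp : ‖y + t • (θ - y) - x‖ ^ 2 =
        ‖y - x‖ ^ 2 + 2 * (t * inner ℝ (y - x) (θ - y)) + t ^ 2 * s := by
      have : y + t • (θ - y) - x = (y - x) + t • (θ - y) := by abel
      rw [this, norm_add_sq_real, real_inner_smul_right, norm_smul]
      simp [hs, mul_pow, Real.norm_eq_abs, sq_abs]
      try ring
    have hci : (inner ℝ (y - x) (θ - y) : ℝ) = -c := by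
      rw [hc, ← inner_neg_left, neg_sub]
    rw [hexp, hci] at hsq
    nlinarith [hsq]
  have hcle : c ≤ 0 := by
    by_contra hlt
    push_neg at hlt
    rcases eq_or_lt_of_le hs0 with hseq | hspos
    · have := key 1 zero_le_one le_rfl
      rw [← hseq] at this; nlinarith
    · have ht0 : (0:ℝ) < min 1 (c / s) := by
        apply lt_min one_pos; positivity
      have := key (min 1 (c / s)) ht0.le (min_le_left _ _)
      have hts : min 1 (c / s) * s ≤ c := by
        calc min 1 (c / s) * s ≤ (c / s) * s :=
              mul_le_mul_of_nonneg_right (min_le_right _ _) hs0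
          _ = c := by field_simp
      nlinarith [this, hts, ht0, mul_le_mul_of_nonneg_left (min_le_left 1 (c/s)) ht0.le]
  have hfin : ‖y - θ‖ ^ 2 ≤ ‖x - θ‖ ^ 2 := by
    have hdecomp : x - θ = (x - y) + (y - θ) := by abel
    rw [hdecomp, norm_add_sq_real]
    have : (inner ℝ (x - y) (y - θ) : ℝ) = -c := by
      rw [hc, ← inner_neg_right, neg_sub]
    rw [this]
    have : ‖y - θ‖ = ‖θ - y‖ := norm_sub_rev _ _
    nlinarith [sq_nonneg ‖x - y‖, hcle]
  have := Real.sqrt_le_sqrt hfin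
  rwa [Real.sqrt_sq (norm_nonneg _), Real.sqrt_sq (norm_nonneg _)] at this

set_option maxHeartbeats 800000 in
/-- One-step energy decrease of the (unprojected) LMS update. -/
lemma lms_step {n d : ℕ} (D : Matrix (Fin n) (Fin d) ℝ) (μ : ℝ) (hμ : 0 < μ)
    (hD : μ * specNorm D ^ 2 ≤ 1) (e : Fin d → ℝ) (w : Fin n → ℝ) :
    vnorm (-e + μ • Dᵀ.mulVec (D.mulVec e + w)) ^ 2 ≤
      vnorm e ^ 2 - μ * vnorm (D.mulVec e) ^ 2 + μ * vnorm w ^ 2 := by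
  set ι : (Fin d → ℝ) → EuclideanSpace ℝ (Fin d) := fun v => (WithLp.equiv 2 (Fin d → ℝ)).symm v with hι
  set κ : (Fin n → ℝ) → EuclideanSpace ℝ (Fin n) := fun v => (WithLp.equiv 2 (Fin n → ℝ)).symm v with hκ
  set E := ι e with hE
  set W := κ w with hW
  set P := κ (D.mulVec e + w) with hPdef
  set BP := ι (Dᵀ.mulVec (D.mulVec e + w)) with hBP
  set AE := κ (D.mulVec e) with hAE
  have hPsplit : P = AE + W := rfl
  -- rewrite the goal in terms of norms
  have hlhs : vnorm (-e + μ • Dᵀ.mulVec (D.mulVec e + w)) = ‖-E + μ • BP‖ :=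
    vnorm_eq _
  have he' : vnorm e = ‖E‖ := vnorm_eq e
  have hae' : vnorm (D.mulVec e) = ‖AE‖ := vnorm_eq (D.mulVec e)
  have hw' : vnorm w = ‖W‖ := vnorm_eq w
  rw [hlhs, he', hae', hw']
  -- expand the square
  have hexp : ‖-E + μ • BP‖ ^ 2 = ‖E‖ ^ 2 - 2 * μ * inner ℝ E BP + μ ^ 2 * ‖BP‖ ^ 2 := by
    rw [norm_add_sq_real, inner_smul_right, norm_smul, norm_neg, inner_neg_left]
    simp [mul_pow, Real.norm_eq_abs, sq_abs]
    ring
  have hadj : (inner ℝ E BP : ℝ) = inner ℝ AE P := by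
    rw [hE, hBP, hAE, hPdef, hι, hκ]
    exact inner_transpose D e (D.mulVec e + w)
  have hBPle : ‖BP‖ ≤ specNorm D * ‖P‖ := mulVec_transpose_norm_le D _
  have hBP2 : μ ^ 2 * ‖BP‖ ^ 2 ≤ μ * ‖P‖ ^ 2 := by
    have h1 : ‖BP‖ ^ 2 ≤ specNorm D ^ 2 * ‖P‖ ^ 2 := by
      have := mul_le_mul hBPle hBPle (norm_nonneg _)
        (mul_nonneg (by unfold specNorm; positivity) (norm_nonneg _))
      nlinarith [this]
    calc μ ^ 2 * ‖BP‖ ^ 2 ≤ μ ^ 2 * (specNorm D ^ 2 * ‖P‖ ^ 2) := by nlinarith [sq_nonneg μ]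
      _ = μ * ((μ * specNorm D ^ 2) * ‖P‖ ^ 2) := by ring
      _ ≤ μ * (1 * ‖P‖ ^ 2) := by
          apply mul_le_mul_of_nonneg_left _ hμ.le
          exact mul_le_mul_of_nonneg_right hD (sq_nonneg _)
      _ = μ * ‖P‖ ^ 2 := by ring
  have hPsq : ‖P‖ ^ 2 = ‖AE‖ ^ 2 + 2 * inner ℝ AE W + ‖W‖ ^ 2 := by
    rw [hPsplit, norm_add_sq_real]
  have hinnP : (inner ℝ AE P : ℝ) = ‖AE‖ ^ 2 + inner ℝ AE W := by
    rw [hPsplit, inner_add_right, real_inner_self_eq_norm_sq]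
  nlinarith [hexp, hadj, hBP2, hPsq, hinnP]

/-- cumulative prediction-error bound of projected LMS. -/
theorem lms_cumulative_prediction_error_bound
    {d n : ℕ} (hd : 1 ≤ d) (hn : 1 ≤ n)
    (Θ : Set (Fin d → ℝ)) (hΘne : Θ.Nonempty) (hΘcomp : IsCompact Θ) (hΘconv : Convex ℝ Θ)
    (θstar : Fin d → ℝ) (hθstar : θstar ∈ Θ)
    (μ : ℝ) (hμ : 0 < μ)
    (D : ℕ → Matrix (Fin n) (Fin d) ℝ) (hD : ∀ k, μ * specNorm (D k) ^ 2 ≤ 1)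
    (w : ℕ → (Fin n → ℝ))
    (θhat θtil : ℕ → (Fin d → ℝ))
    (hθ0 : θhat 0 ∈ Θ)
    (hupd : ∀ k, θtil (k + 1) =
      θhat k + μ • (D k)ᵀ.mulVec ((D k).mulVec (θstar - θhat k) + w k))
    (hproj_mem : ∀ k, θhat (k + 1) ∈ Θ)
    (hproj : ∀ k, ∀ θ ∈ Θ, vnorm (θhat (k + 1) - θtil (k + 1)) ≤ vnorm (θ - θtil (k + 1))) :
    ∀ T : ℕ,
      ∑ k ∈ Finset.range (T + 1), vnorm ((D k).mulVec (θstar - θhat k)) ^ 2 ≤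
        (1 / μ) * vnorm (θhat 0 - θstar) ^ 2 + ∑ k ∈ Finset.range (T + 1), vnorm (w k) ^ 2 := by
  set ι : (Fin d → ℝ) → EuclideanSpace ℝ (Fin d) := fun v => (WithLp.equiv 2 (Fin d → ℝ)).symm v with hι
  -- per-step inequality
  have step : ∀ k, vnorm (θhat (k + 1) - θstar) ^ 2 ≤
      vnorm (θhat k - θstar) ^ 2 - μ * vnorm ((D k).mulVec (θstar - θhat k)) ^ 2
        + μ * vnorm (w k) ^ 2 := by
    intro k
    -- projection contraction
    have hcontract : vnorm (θhat (k + 1) - θstar) ≤ vnorm (θtil (k + 1) - θstar) := by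
      have hconvK : Convex ℝ (ι '' Θ) := by
        exact hΘconv.linear_image (WithLp.linearEquiv 2 ℝ (Fin d → ℝ)).symm.toLinearMap
      have hyK : ι (θhat (k + 1)) ∈ ι '' Θ := Set.mem_image_of_mem _ (hproj_mem k)
      have hθK : ι θstar ∈ ι '' Θ := Set.mem_image_of_mem _ hθstar
      have hmin : ∀ z ∈ ι '' Θ, ‖ι (θhat (k + 1)) - ι (θtil (k + 1))‖ ≤
          ‖z - ι (θtil (k + 1))‖ := by
        rintro z ⟨θ, hθ, rfl⟩
        have := hproj k θ hθ
        rw [vnorm_eq, vnorm_eq] at this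
        simpa [hι, WithLp.equiv_symm_apply, WithLp.toLp_sub] using this
      have := proj_contract hconvK hyK hθK hmin
      rw [vnorm_eq, vnorm_eq]
      simpa [hι, WithLp.equiv_symm_apply, WithLp.toLp_sub] using this
    have hsq : vnorm (θhat (k + 1) - θstar) ^ 2 ≤ vnorm (θtil (k + 1) - θstar) ^ 2 :=
      pow_le_pow_left₀ (Real.sqrt_nonneg _) hcontract 2
    have hrw : θtil (k + 1) - θstar =
        -(θstar - θhat k) + μ • (D k)ᵀ.mulVec ((D k).mulVec (θstar - θhat k) + w k) := by
      rw [hupd k]; abel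
    have hkey := lms_step (D k) μ hμ (hD k) (θstar - θhat k) (w k)
    rw [hrw]  at hsq
    have hflip : vnorm (θstar - θhat k) = vnorm (θhat k - θstar) := by
      rw [vnorm_eq, vnorm_eq, ← norm_neg]
      congr 1
      simp only [WithLp.equiv_symm_apply, WithLp.toLp_sub, WithLp.toLp_neg]
      rw [neg_sub]
    rw [hflip] at hkey
    linarith [hsq, hkey]
  -- sum up by induction
  have main : ∀ T : ℕ, vnorm (θhat (T + 1) - θstar) ^ 2
      + ∑ k ∈ Finset.range (T + 1), μ * vnorm ((D k).mulVec (θstar - θhat k)) ^ 2 ≤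
      vnorm (θhat 0 - θstar) ^ 2 + ∑ k ∈ Finset.range (T + 1), μ * vnorm (w k) ^ 2 := by
    intro T
    induction T with
    | zero =>
        have h0 := step 0
        rw [Finset.sum_range_one, Finset.sum_range_one]
        linarith
    | succ T ih =>
        simp only [Finset.sum_range_succ] at ih ⊢
        have := step (T + 1)
        linarith [this, ih]
  intro T
  have h := main T
  have hV : 0 ≤ vnorm (θhat (T + 1) - θstar) ^ 2 := sq_nonneg _
  have hsum : μ * ∑ k ∈ Finset.range (T + 1), vnorm ((D k).mulVec (θstar - θhat k)) ^ 2 ≤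
      vnorm (θhat 0 - θstar) ^ 2 + μ * ∑ k ∈ Finset.range (T + 1), vnorm (w k) ^ 2 := by
    rw [Finset.mul_sum, Finset.mul_sum]
    linarith [h, hV]
  have := mul_le_mul_of_nonneg_left hsum (le_of_lt (one_div_pos.2 hμ))
  calc ∑ k ∈ Finset.range (T + 1), vnorm ((D k).mulVec (θstar - θhat k)) ^ 2
      = (1 / μ) * (μ * ∑ k ∈ Finset.range (T + 1), vnorm ((D k).mulVec (θstar - θhat k)) ^ 2) := by
        field_simp
    _ ≤ (1 / μ) * (vnorm (θhat 0 - θstar) ^ 2 + μ * ∑ k ∈ Finset.range (T + 1), vnorm (w k) ^ 2) := this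
    _ = (1 / μ) * vnorm (θhat 0 - θstar) ^ 2 + ∑ k ∈ Finset.range (T + 1), vnorm (w k) ^ 2 := by
        field_simp
end

section
/- Under the stated terminal cost design conditions, the terminal cost ℓ_f(x) = xᵀP_f x + pᵀx satisfies, for every x ∈ ℝ^n, the decrease condition ℓ_f(Ax) − ℓ_f(x) ≤ −(xᵀQx + qᵀx + s(x)ᵀΛ s(x)), where s(x) = max{Hx − h, 0} (componentwise maximum). -/
open Matrix Finset

/-- terminal cost decrease condition. -/
theorem terminal_cost_decrease
    {n c : ℕ} (hn : 1 ≤ n) (hc : 1 ≤ c)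
    (Q : Matrix (Fin n) (Fin n) ℝ) (hQ : Q.PosSemidef)
    (q : Fin n → ℝ)
    (H : Matrix (Fin c) (Fin n) ℝ) (h : Fin c → ℝ) (hh : ∀ i, 0 ≤ h i)
    (Λ : Matrix (Fin c) (Fin c) ℝ) (hΛdiag : ∀ i j, i ≠ j → Λ i j = 0) (hΛ : Λ.PosDef)
    (A : Matrix (Fin n) (Fin n) ℝ) (hA : IsUnit (1 - A))
    (Pf : Matrix (Fin n) (Fin n) ℝ) (hPf : Pf.PosDef)
    (hLMI : (Pf - Aᵀ * Pf * A - (Q + Hᵀ * Λ * H)).PosSemidef)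
    (p : Fin n → ℝ) (hp : p = ((1 - A)⁻¹)ᵀ.mulVec q)
    (ℓf : (Fin n → ℝ) → ℝ)
    (hℓf : ∀ x, ℓf x = x ⬝ᵥ Pf.mulVec x + p ⬝ᵥ x)
    (s : (Fin n → ℝ) → (Fin c → ℝ))
    (hs : ∀ x i, s x i = max (H.mulVec x i - h i) 0) :
    ∀ x : Fin n → ℝ,
      ℓf (A.mulVec x) - ℓf x ≤ -(x ⬝ᵥ Q.mulVec x + q ⬝ᵥ x + s x ⬝ᵥ Λ.mulVec (s x)) := by
  intro x
  have hdet : IsUnit (1 - A).det := (Matrix.isUnit_iff_isUnit_det _).mp hA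
  -- key1 : p ⬝ᵥ x - p ⬝ᵥ (A *ᵥ x) = q ⬝ᵥ x
  have hinv : (1 - A)ᵀ *ᵥ p = q := by
    rw [hp, mulVec_mulVec, ← transpose_mul, Matrix.nonsing_inv_mul _ hdet, transpose_one,
      one_mulVec]
  have key1 : p ⬝ᵥ x - p ⬝ᵥ (A *ᵥ x) = q ⬝ᵥ x := by
    have : p ⬝ᵥ ((1 - A) *ᵥ x) = q ⬝ᵥ x := by
      rw [dotProduct_mulVec, ← mulVec_transpose, hinv]
    rw [sub_mulVec, one_mulVec, dotProduct_sub] at this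
    exact this
  -- quadratic form identities
  have hAq : x ⬝ᵥ ((Aᵀ * Pf * A) *ᵥ x) = (A *ᵥ x) ⬝ᵥ (Pf *ᵥ (A *ᵥ x)) := by
    rw [← mulVec_mulVec, ← mulVec_mulVec, dotProduct_mulVec, vecMul_transpose]
  have hHq : x ⬝ᵥ ((Hᵀ * Λ * H) *ᵥ x) = (H *ᵥ x) ⬝ᵥ (Λ *ᵥ (H *ᵥ x)) := by
    rw [← mulVec_mulVec, ← mulVec_mulVec, dotProduct_mulVec, vecMul_transpose]
  -- key2 : LMI applied to x
  have key2 : (A *ᵥ x) ⬝ᵥ (Pf *ᵥ (A *ᵥ x)) ≤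
      x ⬝ᵥ (Pf *ᵥ x) - x ⬝ᵥ (Q *ᵥ x) - (H *ᵥ x) ⬝ᵥ (Λ *ᵥ (H *ᵥ x)) := by
    have h0 := hLMI.dotProduct_mulVec_nonneg x
    simp only [star_trivial, sub_mulVec, add_mulVec, dotProduct_sub, dotProduct_add] at h0
    rw [hAq, hHq] at h0
    linarith
  -- Λ is diagonal with nonneg entries
  have hΛnn : ∀ i, 0 ≤ Λ i i := by
    intro i
    have hne : (Pi.single i 1 : Fin c → ℝ) ≠ 0 := by
      intro hcon
      have := congrFun hcon i
      simp at this
    have := (hΛ.dotProduct_mulVec_pos hne).le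
    simpa [dotProduct, mulVec, Pi.single_apply, Finset.mul_sum, mul_ite] using this
  have hΛdiag' : ∀ (v : Fin c → ℝ), v ⬝ᵥ (Λ *ᵥ v) = ∑ i, Λ i i * (v i)^2 := by
    intro v
    simp only [dotProduct, mulVec]
    refine Finset.sum_congr rfl fun i _ => ?_
    rw [Finset.sum_eq_single i]
    · ring
    · intro j _ hj; rw [hΛdiag i j (Ne.symm hj)]; ring
    · intro hi; exact absurd (Finset.mem_univ i) hi
  -- key3 : s x ⬝ᵥ Λ *ᵥ s x ≤ (H *ᵥ x) ⬝ᵥ Λ *ᵥ (H *ᵥ x)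
  have key3 : s x ⬝ᵥ (Λ *ᵥ s x) ≤ (H *ᵥ x) ⬝ᵥ (Λ *ᵥ (H *ᵥ x)) := by
    rw [hΛdiag', hΛdiag']
    refine Finset.sum_le_sum fun i _ => ?_
    have hsq : (s x i)^2 ≤ ((H *ᵥ x) i)^2 := by
      rw [hs]
      rcases le_or_gt ((H *ᵥ x) i - h i) 0 with hle | hlt
      · rw [max_eq_right hle]; simpa using sq_nonneg ((H *ᵥ x) i)
      · rw [max_eq_left hlt.le]
        have h1 : 0 < (H *ᵥ x) i - h i := hlt
        have h2 := hh i
        nlinarith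
    exact mul_le_mul_of_nonneg_left hsq (hΛnn i)
  rw [hℓf, hℓf]
  linarith
end

section
/- Suppose the disturbances have finite energy, i.e. there is a finite constant S_w with Σ_{k=0}^{T} ‖w_k‖² ≤ S_w for all T ∈ ℕ. Then the projected LMS one-step prediction errors x̃_{1|k} = D_k(θ* − θ̂_k) satisfy lim_{T→∞} (1/T) Σ_{k=0}^{T−1} (‖x̃_{1|k}‖ + ‖w_k‖) = 0. -/
open Matrix Finset

noncomputable def ip {m : ℕ} (u v : Fin m → ℝ) : ℝ := ∑ i, u i * v i

lemma vnorm_nonneg {m : ℕ} (v : Fin m → ℝ) : 0 ≤ vnorm v := Real.sqrt_nonneg _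

lemma vnorm_sq {m : ℕ} (v : Fin m → ℝ) : vnorm v ^ 2 = ip v v := by
  rw [vnorm, Real.sq_sqrt (by positivity)]
  exact Finset.sum_congr rfl fun i _ => sq (v i)

lemma ip_cs {m : ℕ} (u v : Fin m → ℝ) : ip u v ≤ vnorm u * vnorm v := by
  have h := real_inner_le_norm ((WithLp.equiv 2 (Fin m → ℝ)).symm u) ((WithLp.equiv 2 (Fin m → ℝ)).symm v)
  simpa [ip, PiLp.inner_apply, RCLike.inner_apply, conj_trivial, EuclideanSpace.norm_eq,
    vnorm, Real.norm_eq_abs, sq_abs, mul_comm] using h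

lemma vnorm_mulVec_le {n d : ℕ} (D : Matrix (Fin n) (Fin d) ℝ) (v : Fin d → ℝ) :
    vnorm (D.mulVec v) ≤ specNorm D * vnorm v := by
  have h := (LinearMap.toContinuousLinearMap (Matrix.toEuclideanLin D)).le_opNorm
    ((WithLp.equiv 2 (Fin d → ℝ)).symm v)
  have hv : vnorm v = ‖(WithLp.equiv 2 (Fin d → ℝ)).symm v‖ := by
    simp [vnorm, EuclideanSpace.norm_eq, Real.norm_eq_abs, sq_abs]
  have hDv : vnorm (D.mulVec v) =
      ‖LinearMap.toContinuousLinearMap (Matrix.toEuclideanLin D) ((WithLp.equiv 2 (Fin d → ℝ)).symm v)‖ := by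
    simp [vnorm, EuclideanSpace.norm_eq, Real.norm_eq_abs, sq_abs,
      LinearMap.coe_toContinuousLinearMap', Matrix.toEuclideanLin_apply]
  rw [hv, hDv]; exact h

lemma ip_comm {m : ℕ} (u v : Fin m → ℝ) : ip u v = ip v u := by
  unfold ip; exact Finset.sum_congr rfl fun i _ => mul_comm _ _

lemma ip_add_right {m : ℕ} (u v w : Fin m → ℝ) : ip u (v + w) = ip u v + ip u w := by
  unfold ip; rw [← Finset.sum_add_distrib]
  exact Finset.sum_congr rfl fun i _ => by simp [mul_add]

lemma ip_sub_smul {m : ℕ} (a b : Fin m → ℝ) (c : ℝ) :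
    ip (a - c • b) (a - c • b) = ip a a - 2*c*ip a b + c^2 * ip b b := by
  unfold ip
  rw [Finset.mul_sum, Finset.mul_sum, ← Finset.sum_sub_distrib, ← Finset.sum_add_distrib]
  exact Finset.sum_congr rfl fun i _ => by simp [Pi.sub_apply, Pi.smul_apply, smul_eq_mul]; ring

lemma ip_add_smul {m : ℕ} (a b : Fin m → ℝ) (c : ℝ) :
    ip (a + c • b) (a + c • b) = ip a a + 2*c*ip a b + c^2 * ip b b := by
  unfold ip
  rw [Finset.mul_sum, Finset.mul_sum, ← Finset.sum_add_distrib, ← Finset.sum_add_distrib]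
  exact Finset.sum_congr rfl fun i _ => by simp [Pi.add_apply, Pi.smul_apply, smul_eq_mul]; ring

lemma ip_transpose {n d : ℕ} (D : Matrix (Fin n) (Fin d) ℝ) (z : Fin n → ℝ) (v : Fin d → ℝ) :
    ip (Dᵀ.mulVec z) v = ip z (D.mulVec v) := by
  have : ip (Dᵀ.mulVec z) v = (Dᵀ.mulVec z) ⬝ᵥ v := rfl
  rw [this, Matrix.mulVec_transpose, ← Matrix.dotProduct_mulVec]; rfl

lemma descent_step {n d : ℕ} (D : Matrix (Fin n) (Fin d) ℝ) {μ : ℝ} (hμ : 0 < μ)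
    (hD : μ * specNorm D ^ 2 ≤ 1) (e : Fin d → ℝ) (wv : Fin n → ℝ) :
    vnorm (e - μ • Dᵀ.mulVec (D.mulVec e + wv)) ^ 2 ≤
      vnorm e ^ 2 - μ * vnorm (D.mulVec e) ^ 2 + μ * vnorm wv ^ 2 := by
  set x := D.mulVec e with hx
  set z := x + wv with hz
  set u := Dᵀ.mulVec z with hu
  have hNnn : 0 ≤ specNorm D := norm_nonneg _
  -- ‖u‖ ≤ N ‖z‖
  have h1 : vnorm u ^ 2 ≤ specNorm D * vnorm z * vnorm u := by
    rw [vnorm_sq, hu, ip_transpose]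
    calc ip z (D.mulVec u) ≤ vnorm z * vnorm (D.mulVec u) := ip_cs _ _
      _ ≤ vnorm z * (specNorm D * vnorm u) :=
        mul_le_mul_of_nonneg_left (vnorm_mulVec_le D u) (vnorm_nonneg _)
      _ = specNorm D * vnorm z * vnorm u := by ring
  have h2 : vnorm u ≤ specNorm D * vnorm z := by
    rcases eq_or_lt_of_le (vnorm_nonneg u) with h | h
    · rw [← h]; exact mul_nonneg hNnn (vnorm_nonneg _)
    · exact (mul_le_mul_iff_of_pos_right h).mp (by rw [← pow_two]; exact h1)
  -- μ² ‖u‖² ≤ μ ‖z‖²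
  have h3 : μ^2 * vnorm u ^ 2 ≤ μ * vnorm z ^ 2 := by
    have : vnorm u ^ 2 ≤ (specNorm D * vnorm z)^2 :=
      pow_le_pow_left₀ (vnorm_nonneg _) h2 2
    rw [mul_pow] at this
    calc μ^2 * vnorm u ^2 ≤ μ^2 * (specNorm D ^2 * vnorm z ^2) :=
          mul_le_mul_of_nonneg_left this (sq_nonneg μ)
      _ = μ * specNorm D ^2 * (μ * vnorm z ^2) := by ring
      _ ≤ 1 * (μ * vnorm z ^2) :=
          mul_le_mul_of_nonneg_right (by linarith [hD]) (mul_nonneg hμ.le (sq_nonneg _))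
      _ = μ * vnorm z ^2 := by ring
  have hez : ip e u = ip x z := by rw [hu, ip_comm, ip_transpose, ← hx, ip_comm]
  have hzz : vnorm z ^ 2 = vnorm x ^2 + 2 * ip x wv + vnorm wv ^2 := by
    rw [vnorm_sq, hz]
    have := ip_add_smul x wv 1
    simp only [one_smul, one_pow, mul_one, one_mul] at this
    rw [this, vnorm_sq, vnorm_sq]
  have hxz : ip x z = vnorm x ^2 + ip x wv := by
    rw [hz, ip_add_right, vnorm_sq]
  have lhs : vnorm (e - μ • u) ^ 2 = vnorm e ^2 - 2*μ*ip e u + μ^2 * vnorm u ^2 := by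
    rw [vnorm_sq, ip_sub_smul, ← vnorm_sq, ← vnorm_sq]
  have hzz' : μ * vnorm z ^2 = μ*vnorm x^2 + 2*μ*ip x wv + μ * vnorm wv^2 := by
    rw [hzz]; ring
  rw [lhs, hez, hxz]
  linarith [h3, hzz']

lemma vnorm_sq_mono {m : ℕ} {a b : Fin m → ℝ} (h : vnorm a ^ 2 ≤ vnorm b ^ 2) :
    vnorm a ≤ vnorm b := by
  have := Real.sqrt_le_sqrt h
  rwa [Real.sqrt_sq (vnorm_nonneg a), Real.sqrt_sq (vnorm_nonneg b)] at this

lemma proj_nonexpansive {dm : ℕ} {Θ : Set (Fin dm → ℝ)} (hconv : Convex ℝ Θ)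
    {p q t : Fin dm → ℝ} (hp : p ∈ Θ) (hq : q ∈ Θ)
    (hmin : ∀ θ ∈ Θ, vnorm (q - t) ≤ vnorm (θ - t)) :
    vnorm (p - q) ≤ vnorm (p - t) := by
  set C := vnorm (p - q) ^ 2 with hC
  have hCnn : 0 ≤ C := sq_nonneg _
  -- variational inequality
  have hvar : ∀ ε : ℝ, 0 < ε → ε ≤ 1 → 2 * ip (t - q) (p - q) ≤ ε * C := by
    intro ε hε hε1
    have hmem : q + ε • (p - q) ∈ Θ := by
      have := hconv hq hp (by linarith : (0:ℝ) ≤ 1 - ε) hε.le (by ring)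
      have heq : (1 - ε) • q + ε • p = q + ε • (p - q) := by
        ext i; simp [Pi.add_apply, Pi.sub_apply, Pi.smul_apply, smul_eq_mul]; ring
      rwa [heq] at this
    have h1 := hmin _ hmem
    have h2 : vnorm (q - t) ^ 2 ≤ vnorm (q + ε • (p - q) - t) ^ 2 :=
      pow_le_pow_left₀ (vnorm_nonneg _) h1 2
    have h3 : vnorm (q + ε • (p - q) - t) ^ 2 =
        vnorm (q - t) ^ 2 + 2 * ε * ip (q - t) (p - q) + ε ^ 2 * C := by
      have hre : q + ε • (p - q) - t = (q - t) + ε • (p - q) := by abel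
      rw [hre, vnorm_sq, ip_add_smul, ← vnorm_sq, ← vnorm_sq, hC]
    have h4 : 0 ≤ 2 * ε * ip (q - t) (p - q) + ε ^ 2 * C := by
      rw [h3] at h2; linarith
    have h5 : ip (t - q) (p - q) = - ip (q - t) (p - q) := by
      unfold ip
      rw [← Finset.sum_neg_distrib]
      exact Finset.sum_congr rfl fun i _ => by simp [Pi.sub_apply]; ring
    rw [h5]
    have h6 : ε * (2 * ip (q - t) (p - q) + ε * C) ≥ 0 := by nlinarith
    have h7 : 0 ≤ 2 * ip (q - t) (p - q) + ε * C := nonneg_of_mul_nonneg_right h6 hε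
    linarith
  have hle : ip (t - q) (p - q) ≤ 0 := by
    by_contra h
    push_neg at h
    rcases eq_or_lt_of_le hCnn with hc | hc
    · have := hvar 1 one_pos le_rfl
      rw [← hc] at this; linarith
    · have hε : 0 < min 1 (ip (t - q) (p - q) / C) := by
        apply lt_min one_pos; positivity
      have := hvar _ hε (min_le_left _ _)
      have h8 : min 1 (ip (t - q) (p - q) / C) * C ≤ (ip (t - q) (p - q) / C) * C :=
        mul_le_mul_of_nonneg_right (min_le_right _ _) hCnn
      rw [div_mul_cancel₀ _ hc.ne'] at h8
      linarith
  apply vnorm_sq_mono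
  have hexp : vnorm (p - t) ^ 2 = vnorm (p - q) ^2 - 2 * ip (p - q) (t - q) + vnorm (t - q) ^2 := by
    have hre : p - t = (p - q) - (1:ℝ) • (t - q) := by
      rw [one_smul]; abel
    rw [hre, vnorm_sq, ip_sub_smul, ← vnorm_sq, ← vnorm_sq]; ring
  have hcomm : ip (p - q) (t - q) = ip (t - q) (p - q) := ip_comm _ _
  nlinarith [sq_nonneg (vnorm (t - q))]


/-- asymptotic convergence of the averaged prediction error
under finite-energy disturbances. -/
theorem lms_prediction_error_average_tendsto_zero
    {d n : ℕ} (hd : 1 ≤ d) (hn : 1 ≤ n)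
    (Θ : Set (Fin d → ℝ)) (hΘne : Θ.Nonempty) (hΘcomp : IsCompact Θ) (hΘconv : Convex ℝ Θ)
    (θstar : Fin d → ℝ) (hθstar : θstar ∈ Θ)
    (μ : ℝ) (hμ : 0 < μ)
    (D : ℕ → Matrix (Fin n) (Fin d) ℝ) (hD : ∀ k, μ * specNorm (D k) ^ 2 ≤ 1)
    (w : ℕ → (Fin n → ℝ))
    (θhat θtil : ℕ → (Fin d → ℝ))
    (hθ0 : θhat 0 ∈ Θ)
    (hupd : ∀ k, θtil (k + 1) =
      θhat k + μ • (D k)ᵀ.mulVec ((D k).mulVec (θstar - θhat k) + w k))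
    (hproj_mem : ∀ k, θhat (k + 1) ∈ Θ)
    (hproj : ∀ k, ∀ θ ∈ Θ, vnorm (θhat (k + 1) - θtil (k + 1)) ≤ vnorm (θ - θtil (k + 1)))
    (Sw : ℝ) (hSw : ∀ T : ℕ, ∑ k ∈ Finset.range (T + 1), vnorm (w k) ^ 2 ≤ Sw) :
    Filter.Tendsto
      (fun T : ℕ => (1 / (T : ℝ)) *
        ∑ k ∈ Finset.range T, (vnorm ((D k).mulVec (θstar - θhat k)) + vnorm (w k)))
      Filter.atTop (nhds 0) := by
  set e : ℕ → (Fin d → ℝ) := fun k => θstar - θhat k with he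
  set x : ℕ → (Fin n → ℝ) := fun k => (D k).mulVec (e k) with hx
  set a : ℕ → ℝ := fun k => vnorm (e k) ^ 2 with ha
  -- one-step descent
  have hstep : ∀ k, a (k+1) ≤ a k - μ * vnorm (x k) ^ 2 + μ * vnorm (w k) ^ 2 := by
    intro k
    have hne : vnorm (e (k+1)) ≤ vnorm (θstar - θtil (k+1)) :=
      proj_nonexpansive hΘconv hθstar (hproj_mem k) (hproj k)
    have hform : θstar - θtil (k+1) =
        e k - μ • (D k)ᵀ.mulVec ((D k).mulVec (e k) + w k) := by
      rw [hupd k, he]; beta_reduce; abel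
    have hdesc := descent_step (D k) hμ (hD k) (e k) (w k)
    calc a (k+1) ≤ vnorm (θstar - θtil (k+1)) ^ 2 :=
          pow_le_pow_left₀ (vnorm_nonneg _) hne 2
      _ = vnorm (e k - μ • (D k)ᵀ.mulVec ((D k).mulVec (e k) + w k)) ^ 2 := by rw [hform]
      _ ≤ vnorm (e k) ^ 2 - μ * vnorm ((D k).mulVec (e k)) ^ 2 + μ * vnorm (w k) ^ 2 := hdesc
      _ = a k - μ * vnorm (x k) ^ 2 + μ * vnorm (w k) ^ 2 := rfl
  -- disturbance energy bounds
  have hwsum : ∀ T : ℕ, ∑ k ∈ Finset.range T, vnorm (w k) ^ 2 ≤ Sw := by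
    intro T
    calc ∑ k ∈ Finset.range T, vnorm (w k) ^ 2
        ≤ ∑ k ∈ Finset.range (T+1), vnorm (w k) ^ 2 :=
          Finset.sum_le_sum_of_subset_of_nonneg
            (Finset.range_subset_range.mpr (Nat.le_succ T)) (fun i _ _ => sq_nonneg _)
      _ ≤ Sw := hSw T
  have hSwnn : 0 ≤ Sw := le_trans (by simp [sq_nonneg]) (hSw 0)
  -- telescoping
  have htel : ∀ T : ℕ, a T + μ * ∑ k ∈ Finset.range T, vnorm (x k) ^ 2 ≤
      a 0 + μ * ∑ k ∈ Finset.range T, vnorm (w k) ^ 2 := by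
    intro T
    induction T with
    | zero => simp
    | succ T ih =>
      rw [Finset.sum_range_succ, Finset.sum_range_succ]
      have := hstep T
      nlinarith [hμ.le]
  set B : ℝ := a 0 / μ + Sw with hB
  have hxB : ∀ T : ℕ, ∑ k ∈ Finset.range T, vnorm (x k) ^ 2 ≤ B := by
    intro T
    have h1 := htel T
    have h2 : 0 ≤ a T := sq_nonneg _
    have h3 := hwsum T
    have h4 : μ * ∑ k ∈ Finset.range T, vnorm (x k) ^ 2 ≤ a 0 + μ * Sw := by nlinarith
    have h5 : ∑ k ∈ Finset.range T, vnorm (x k) ^ 2 ≤ (a 0 + μ * Sw) / μ := by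
      rw [le_div_iff₀ hμ]; linarith
    have h6 : (a 0 + μ * Sw) / μ = a 0 / μ + Sw := by
      rw [add_div, mul_div_cancel_left₀ _ hμ.ne']
    rw [hB]; rw [h6] at h5; exact h5
  have hBnn : 0 ≤ B := le_trans (by simp) (hxB 0)
  set K : ℝ := 2 * (B + Sw) with hK
  have hKnn : 0 ≤ K := by rw [hK]; linarith
  -- Cauchy-Schwarz bound on the averaged sum
  set S : ℕ → ℝ := fun T => ∑ k ∈ Finset.range T, (vnorm (x k) + vnorm (w k)) with hS
  have hSnn : ∀ T, 0 ≤ S T :=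
    fun T => Finset.sum_nonneg fun k _ => add_nonneg (vnorm_nonneg _) (vnorm_nonneg _)
  have hSsq : ∀ T : ℕ, (S T)^2 ≤ T * K := by
    intro T
    have h1 : (S T)^2 ≤ (Finset.range T).card * ∑ k ∈ Finset.range T,
        (vnorm (x k) + vnorm (w k))^2 := sq_sum_le_card_mul_sum_sq
    have h2 : ∑ k ∈ Finset.range T, (vnorm (x k) + vnorm (w k))^2 ≤
        ∑ k ∈ Finset.range T, (2 * vnorm (x k)^2 + 2 * vnorm (w k)^2) :=
      Finset.sum_le_sum fun k _ => by nlinarith [sq_nonneg (vnorm (x k) - vnorm (w k))]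
    have h3 : ∑ k ∈ Finset.range T, (2 * vnorm (x k)^2 + 2 * vnorm (w k)^2) ≤ K := by
      rw [Finset.sum_add_distrib, ← Finset.mul_sum, ← Finset.mul_sum, hK]
      have := hxB T; have := hwsum T
      nlinarith
    rw [Finset.card_range] at h1
    calc (S T)^2 ≤ T * ∑ k ∈ Finset.range T, (vnorm (x k) + vnorm (w k))^2 := h1
      _ ≤ T * K := by
          apply mul_le_mul_of_nonneg_left (le_trans h2 h3) (Nat.cast_nonneg T)
  -- squeeze
  have hbound : ∀ T : ℕ, (1 / (T:ℝ)) * S T ≤ Real.sqrt (K * (1 / T)) := by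
    intro T
    rcases Nat.eq_zero_or_pos T with rfl | hT
    · simp [hS]
    · have hTpos : (0:ℝ) < T := Nat.cast_pos.mpr hT
      have hfnn : 0 ≤ (1 / (T:ℝ)) * S T := mul_nonneg (by positivity) (hSnn T)
      have hfsq : ((1 / (T:ℝ)) * S T)^2 ≤ K * (1 / T) := by
        have h1 := hSsq T
        have : ((1 / (T:ℝ)) * S T)^2 = (S T)^2 / T^2 := by
          field_simp
        rw [this]
        rw [div_le_iff₀ (by positivity)]
        calc (S T)^2 ≤ T * K := h1
          _ = K * (1/T) * T^2 := by field_simp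
      calc (1 / (T:ℝ)) * S T = Real.sqrt (((1 / (T:ℝ)) * S T)^2) :=
            (Real.sqrt_sq hfnn).symm
        _ ≤ Real.sqrt (K * (1/T)) := Real.sqrt_le_sqrt hfsq
  have hgto : Filter.Tendsto (fun T : ℕ => Real.sqrt (K * (1 / T))) Filter.atTop (nhds 0) := by
    have h1 : Filter.Tendsto (fun T : ℕ => K * (1 / (T:ℝ))) Filter.atTop (nhds 0) := by
      have := tendsto_one_div_atTop_nhds_zero_nat.const_mul K
      simpa using this
    have h2 := (Real.continuous_sqrt.tendsto 0).comp h1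
    simpa only [Function.comp_def, Real.sqrt_zero] using h2
  exact squeeze_zero (fun T => mul_nonneg (by positivity) (hSnn T)) hbound hgto
end

section
/- Let θ̂, θ', θ* ∈ ℝ^d, x ∈ ℝ^n, w ∈ ℝ^n, and inputs u_0, u_1, …, u_N ∈ ℝ^m. Define the nominal trajectory x̂*_0 = x, x̂*_{j+1} = A(θ̂)x̂*_j + B(θ̂)u_j for 0 ≤ j ≤ N−1, and the shifted candidate trajectory ŷ_0 = A(θ*)x + B(θ*)u_0 + w, ŷ_{j+1} = A(θ')ŷ_j + B(θ')u_{j+1}. Then for every j with 1 ≤ j ≤ N, the trajectory difference Δx_j := ŷ_{j−1} − x̂*_j satisfies Δx_j = A(θ')^{j−1}(w + D(x, u_0)(θ* − θ̂)) + Σ_{i=1}^{j−1} A(θ')^{j−1−i} D(x̂*_i, u_i)(θ' − θ̂). -/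
open Matrix Finset

lemma key_diff {n m d : ℕ}
    (A0 : Matrix (Fin n) (Fin n) ℝ) (Ai : Fin d → Matrix (Fin n) (Fin n) ℝ)
    (B0 : Matrix (Fin n) (Fin m) ℝ) (Bi : Fin d → Matrix (Fin n) (Fin m) ℝ)
    (θ θ'' : Fin d → ℝ) (x : Fin n → ℝ) (u : Fin m → ℝ) :
    ((A0 + ∑ i, θ i • Ai i).mulVec x + (B0 + ∑ i, θ i • Bi i).mulVec u)
      - ((A0 + ∑ i, θ'' i • Ai i).mulVec x + (B0 + ∑ i, θ'' i • Bi i).mulVec u)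
      = (Matrix.of fun j i => (Ai i).mulVec x j + (Bi i).mulVec u j).mulVec (θ - θ'') := by
  have hs : ∀ (θ : Fin d → ℝ), (∑ i, θ i • Ai i).mulVec x = ∑ i, θ i • (Ai i).mulVec x := by
    intro θ; funext j
    simp [Matrix.mulVec, dotProduct, Finset.sum_apply, Matrix.sum_apply,
      Finset.sum_mul, smul_eq_mul]
    rw [Finset.sum_comm]
    exact Finset.sum_congr rfl fun i _ => by rw [Finset.mul_sum]; exact Finset.sum_congr rfl fun k _ => by ring
  have hs' : ∀ (θ : Fin d → ℝ), (∑ i, θ i • Bi i).mulVec u = ∑ i, θ i • (Bi i).mulVec u := by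
    intro θ; funext j
    simp [Matrix.mulVec, dotProduct, Finset.sum_apply, Matrix.sum_apply,
      Finset.sum_mul, smul_eq_mul]
    rw [Finset.sum_comm]
    exact Finset.sum_congr rfl fun i _ => by rw [Finset.mul_sum]; exact Finset.sum_congr rfl fun k _ => by ring
  have hr : (Matrix.of fun j i => (Ai i).mulVec x j + (Bi i).mulVec u j).mulVec (θ - θ'')
      = ∑ i, (θ i - θ'' i) • ((Ai i).mulVec x + (Bi i).mulVec u) := by
    funext j
    simp [Matrix.mulVec, dotProduct, Finset.sum_apply, smul_eq_mul]
    exact Finset.sum_congr rfl fun i _ => by ring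
  have hsplit : ∑ i, (θ i - θ'' i) • ((Ai i).mulVec x + (Bi i).mulVec u)
      = (∑ i, θ i • (Ai i).mulVec x + ∑ i, θ i • (Bi i).mulVec u)
        - (∑ i, θ'' i • (Ai i).mulVec x + ∑ i, θ'' i • (Bi i).mulVec u) := by
    simp only [sub_smul, smul_add, Finset.sum_add_distrib, Finset.sum_sub_distrib]
    abel
  rw [Matrix.add_mulVec, Matrix.add_mulVec, Matrix.add_mulVec, Matrix.add_mulVec,
    hs, hs, hs', hs', hr, hsplit]
  abel

/-- explicit expression for the difference between the shifted
candidate trajectory and the nominal predicted trajectory. -/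
theorem trajectory_difference_formula
    {n m d : ℕ} (hn : 1 ≤ n) (hm : 1 ≤ m) (hd : 1 ≤ d)
    (A0 : Matrix (Fin n) (Fin n) ℝ) (Ai : Fin d → Matrix (Fin n) (Fin n) ℝ)
    (B0 : Matrix (Fin n) (Fin m) ℝ) (Bi : Fin d → Matrix (Fin n) (Fin m) ℝ)
    (Am : (Fin d → ℝ) → Matrix (Fin n) (Fin n) ℝ)
    (Bm : (Fin d → ℝ) → Matrix (Fin n) (Fin m) ℝ)
    (hAm : ∀ θ : Fin d → ℝ, Am θ = A0 + ∑ i, θ i • Ai i)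
    (hBm : ∀ θ : Fin d → ℝ, Bm θ = B0 + ∑ i, θ i • Bi i)
    (Dm : (Fin n → ℝ) → (Fin m → ℝ) → Matrix (Fin n) (Fin d) ℝ)
    (hDm : ∀ x u, Dm x u = Matrix.of fun j i => (Ai i).mulVec x j + (Bi i).mulVec u j)
    (θhat θ' θstar : Fin d → ℝ)
    (x w : Fin n → ℝ)
    (N : ℕ) (hN : 1 ≤ N) (u : ℕ → (Fin m → ℝ))
    (xhat : ℕ → (Fin n → ℝ))
    (hxhat0 : xhat 0 = x)
    (hxhatS : ∀ j < N, xhat (j + 1) = (Am θhat).mulVec (xhat j) + (Bm θhat).mulVec (u j))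
    (y : ℕ → (Fin n → ℝ))
    (hy0 : y 0 = (Am θstar).mulVec x + (Bm θstar).mulVec (u 0) + w)
    (hyS : ∀ j < N, y (j + 1) = (Am θ').mulVec (y j) + (Bm θ').mulVec (u (j + 1))) :
    ∀ j : ℕ, j + 1 ≤ N →
      y j - xhat (j + 1) =
        ((Am θ') ^ j).mulVec (w + (Dm x (u 0)).mulVec (θstar - θhat)) +
          ∑ i ∈ Finset.Ico 1 (j + 1),
            ((Am θ') ^ (j - i)).mulVec ((Dm (xhat i) (u i)).mulVec (θ' - θhat)) := by
  have key : ∀ (θ θ'' : Fin d → ℝ) (xv : Fin n → ℝ) (uv : Fin m → ℝ),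
      ((Am θ).mulVec xv + (Bm θ).mulVec uv) - ((Am θ'').mulVec xv + (Bm θ'').mulVec uv)
        = (Dm xv uv).mulVec (θ - θ'') := by
    intro θ θ'' xv uv
    rw [hAm, hAm, hBm, hBm, hDm]
    exact key_diff A0 Ai B0 Bi θ θ'' xv uv
  have hms : ∀ (M : Matrix (Fin n) (Fin n) ℝ) (s : Finset ℕ) (f : ℕ → Fin n → ℝ),
      M.mulVec (∑ i ∈ s, f i) = ∑ i ∈ s, M.mulVec (f i) := by
    intro M s f
    exact map_sum (Matrix.mulVecLin M) f s
  intro j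
  induction j with
  | zero =>
    intro _
    rw [hy0, hxhatS 0 (by omega), hxhat0]
    simp only [Nat.zero_add, Finset.Ico_self, Finset.sum_empty, add_zero, pow_zero,
      Matrix.one_mulVec, Matrix.mulVec_add]
    rw [← key θstar θhat x (u 0)]
    abel
  | succ j ih =>
    intro h
    have ih' := ih (by omega)
    rw [hyS j (by omega), hxhatS (j + 1) (by omega)]
    have step : (Am θ').mulVec (y j) + (Bm θ').mulVec (u (j + 1))
        - ((Am θhat).mulVec (xhat (j + 1)) + (Bm θhat).mulVec (u (j + 1)))
        = (Am θ').mulVec (y j - xhat (j + 1))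
          + (Dm (xhat (j + 1)) (u (j + 1))).mulVec (θ' - θhat) := by
      rw [← key θ' θhat (xhat (j + 1)) (u (j + 1)), Matrix.mulVec_sub]
      abel
    rw [step, ih', Matrix.mulVec_add, Matrix.mulVec_mulVec, ← pow_succ', hms,
      Finset.sum_Ico_succ_top (by omega : 1 ≤ j + 1)]
    have hsum : ∑ i ∈ Finset.Ico 1 (j + 1),
        (Am θ').mulVec (((Am θ') ^ (j - i)).mulVec ((Dm (xhat i) (u i)).mulVec (θ' - θhat)))
        = ∑ i ∈ Finset.Ico 1 (j + 1),
        ((Am θ') ^ (j + 1 - i)).mulVec ((Dm (xhat i) (u i)).mulVec (θ' - θhat)) := by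
      refine Finset.sum_congr rfl fun i hi => ?_
      rw [Finset.mem_Ico] at hi
      rw [Matrix.mulVec_mulVec, ← pow_succ', show j + 1 - i = j - i + 1 by omega]
    rw [hsum, show j + 1 - (j + 1) = 0 by omega, pow_zero, Matrix.one_mulVec]
    abel
end
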